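/- Let α > 0, n ∈ ℤ, and a ∈ ℚ_p with ‖a‖ = p^n. Then ∫_{‖x‖ = p^n} ‖x - a‖^{α-1} dμ(x) = ((p - 2 + p^{-α})/(p(1 - p^{-α}))) · ‖a‖^α. -/

import Mathlib

open MeasureTheory Set
open scoped ENNReal NNReal

namespace PadicSphereAux

variable {p : ℕ} [Fact p.Prime]

lemma hp1 : (1 : ℝ) < (p : ℕ) := by exact_mod_cast (Fact.out : p.Prime).one_lt

lemma hp0 : (0 : ℝ) < (p : ℕ) := lt_trans one_pos hp1

lemma hpE0 : ((p : ℕ) : ℝ≥0∞) ≠ 0 := by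
  exact_mod_cast (Fact.out : p.Prime).pos.ne'

lemma hpEtop : ((p : ℕ) : ℝ≥0∞) ≠ ∞ := ENNReal.natCast_ne_top p

/-- The closed ball of radius p^k. -/
def B (p : ℕ) [Fact p.Prime] (k : ℤ) : Set ℚ_[p] := {x | ‖x‖ ≤ (p : ℝ) ^ k}

lemma isClosed_B (k : ℤ) : IsClosed (B p k) :=
  isClosed_le continuous_norm continuous_const

lemma isCompact_B (k : ℤ) : IsCompact (B p k) := by
  have h : B p k = Metric.closedBall 0 ((p:ℝ)^k) := by
    ext x; simp [B, Metric.mem_closedBall, dist_eq_norm]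
  rw [h]
  exact isCompact_closedBall 0 _

lemma norm_lt_iff (x : ℚ_[p]) (k : ℤ) : ‖x‖ < (p:ℝ) ^ k ↔ ‖x‖ ≤ (p:ℝ) ^ (k-1) := by
  rw [Padic.norm_le_pow_iff_norm_lt_pow_add_one, sub_add_cancel]

/-- decomposition of the ball of radius p^k into p balls of radius p^(k-1) -/
lemma ball_decomp (k : ℤ) :
    B p k = ⋃ j ∈ Finset.range p, {x : ℚ_[p] | ‖x - (j : ℚ_[p]) * (p : ℚ_[p]) ^ (-k)‖ ≤ (p:ℝ)^(k-1)} := by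
  have hpQ : ((p : ℚ_[p]) ≠ 0) := Nat.cast_ne_zero.mpr (Fact.out : p.Prime).pos.ne'
  ext x
  simp only [mem_iUnion, Finset.mem_range, mem_setOf_eq, exists_prop, B]
  constructor
  · intro hx
    set z : ℚ_[p] := (p : ℚ_[p]) ^ k * x with hz
    have hznorm : ‖z‖ ≤ 1 := by
      rw [hz, norm_mul, Padic.norm_p_zpow]
      calc (p:ℝ) ^ (-k) * ‖x‖ ≤ (p:ℝ)^(-k) * (p:ℝ)^k := by
            apply mul_le_mul_of_nonneg_left hx (le_of_lt (zpow_pos hp0 _))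
        _ = 1 := by rw [← zpow_add₀ (ne_of_gt hp0)]; simp
    set w : ℤ_[p] := ⟨z, hznorm⟩ with hw
    refine ⟨w.zmodRepr, w.zmodRepr_lt_p, ?_⟩
    have hmem := PadicInt.sub_zmodRepr_mem w
    rw [PadicInt.maximalIdeal_eq_span_p, Ideal.mem_span_singleton] at hmem
    obtain ⟨c, hc⟩ := hmem
    have hzj : ‖z - (w.zmodRepr : ℚ_[p])‖ ≤ (p:ℝ)^(-1 : ℤ) := by
      have : (z - (w.zmodRepr : ℚ_[p])) = ((w - (w.zmodRepr : ℤ_[p]) : ℤ_[p]) : ℚ_[p]) := by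
        rw [PadicInt.coe_sub, PadicInt.coe_natCast, hw]
      rw [this, hc]
      push_cast
      rw [norm_mul]
      calc ‖(p : ℚ_[p])‖ * ‖(c : ℚ_[p])‖ ≤ ‖(p : ℚ_[p])‖ * 1 :=
            mul_le_mul_of_nonneg_left (PadicInt.norm_le_one c) (norm_nonneg _)
        _ = (p:ℝ)^(-1 : ℤ) := by rw [mul_one, Padic.norm_p]; simp [zpow_neg]
    have : x - (w.zmodRepr : ℚ_[p]) * (p : ℚ_[p]) ^ (-k) = (p : ℚ_[p])^(-k) * (z - (w.zmodRepr : ℚ_[p])) := by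
      rw [hz, zpow_neg, mul_sub]
      congr 1
      · rw [mul_comm ((p:ℚ_[p])^k)⁻¹, mul_comm ((p:ℚ_[p])^k) x, mul_assoc,
          mul_inv_cancel₀ (zpow_ne_zero _ hpQ), mul_one]
      · rw [mul_comm]
    rw [this, norm_mul, Padic.norm_p_zpow, neg_neg]
    calc (p:ℝ)^k * ‖z - (w.zmodRepr : ℚ_[p])‖ ≤ (p:ℝ)^k * (p:ℝ)^(-1:ℤ) :=
          mul_le_mul_of_nonneg_left hzj (le_of_lt (zpow_pos hp0 _))
      _ = (p:ℝ)^(k-1) := by rw [← zpow_add₀ (ne_of_gt hp0)]; ring_nf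
  · rintro ⟨j, hj, hx⟩
    have h1 : ‖(j : ℚ_[p]) * (p : ℚ_[p]) ^ (-k)‖ ≤ (p:ℝ)^k := by
      rw [norm_mul, Padic.norm_p_zpow, neg_neg]
      calc ‖(j : ℚ_[p])‖ * (p:ℝ)^k ≤ 1 * (p:ℝ)^k := by
            apply mul_le_mul_of_nonneg_right _ (le_of_lt (zpow_pos hp0 _))
            exact_mod_cast Padic.norm_int_le_one (j : ℤ)
        _ = (p:ℝ)^k := one_mul _
    calc ‖x‖ = ‖(x - (j : ℚ_[p]) * (p : ℚ_[p]) ^ (-k)) + (j : ℚ_[p]) * (p : ℚ_[p]) ^ (-k)‖ := by ring_nf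
      _ ≤ max ‖x - (j : ℚ_[p]) * (p : ℚ_[p]) ^ (-k)‖ ‖(j : ℚ_[p]) * (p : ℚ_[p]) ^ (-k)‖ :=
          Padic.nonarchimedean _ _
      _ ≤ (p:ℝ)^k := by
          apply max_le (le_trans hx _) h1
          apply zpow_le_zpow_right₀ (le_of_lt hp1); omega

lemma ball_pieces_disjoint (k : ℤ) :
    (Finset.range p : Set ℕ).PairwiseDisjoint
      (fun j => {x : ℚ_[p] | ‖x - (j : ℚ_[p]) * (p : ℚ_[p]) ^ (-k)‖ ≤ (p:ℝ)^(k-1)}) := by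
  intro i hi j hj hij
  simp only [Finset.coe_range, mem_Iio] at hi hj
  refine Set.disjoint_left.mpr ?_
  intro x hxi hxj
  simp only [mem_setOf_eq] at hxi hxj
  have hnorm1 : ‖((i : ℚ_[p]) - (j : ℚ_[p]))‖ = 1 := by
    have hle : ‖((i - j : ℤ) : ℚ_[p])‖ ≤ 1 := Padic.norm_int_le_one _
    have hlt : ¬ ‖((i - j : ℤ) : ℚ_[p])‖ < 1 := by
      rw [Padic.norm_intCast_lt_one_iff]
      intro hdvd
      have h1 : (p:ℤ) ≤ |(i:ℤ) - j| :=
        Int.le_of_dvd (abs_pos.mpr (by omega)) ((dvd_abs _ _).mpr hdvd)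
      rcases abs_cases ((i:ℤ) - j) with ⟨h2, _⟩ | ⟨h2, _⟩ <;> omega
    have h1 : (1:ℝ) ≤ ‖((i - j : ℤ) : ℚ_[p])‖ := not_lt.mp hlt
    have h2 := le_antisymm hle h1
    push_cast at h2 ⊢
    exact h2
  have key : ‖((i : ℚ_[p]) - j) * (p : ℚ_[p]) ^ (-k)‖ = (p:ℝ)^k := by
    rw [norm_mul, Padic.norm_p_zpow, neg_neg, hnorm1, one_mul]
  have hle : ‖((i : ℚ_[p]) - j) * (p : ℚ_[p]) ^ (-k)‖ ≤ (p:ℝ)^(k-1) := by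
    have heq : ((i : ℚ_[p]) - j) * (p : ℚ_[p]) ^ (-k)
        = (x - (j : ℚ_[p]) * (p : ℚ_[p]) ^ (-k)) - (x - (i : ℚ_[p]) * (p : ℚ_[p]) ^ (-k)) := by
      ring
    rw [heq, sub_eq_add_neg]
    calc ‖(x - (j : ℚ_[p]) * (p : ℚ_[p]) ^ (-k)) + -(x - (i : ℚ_[p]) * (p : ℚ_[p]) ^ (-k))‖
        ≤ max ‖x - (j : ℚ_[p]) * (p : ℚ_[p]) ^ (-k)‖ ‖-(x - (i : ℚ_[p]) * (p : ℚ_[p]) ^ (-k))‖ :=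
          Padic.nonarchimedean _ _
      _ ≤ (p:ℝ)^(k-1) := by rw [norm_neg]; exact max_le hxj hxi
  rw [key] at hle
  have : (p:ℝ)^(k-1) < (p:ℝ)^k := zpow_lt_zpow_right₀ hp1 (by omega)
  linarith


lemma isClosed_shifted (c : ℚ_[p]) (r : ℝ) : IsClosed {x : ℚ_[p] | ‖x - c‖ ≤ r} :=
  isClosed_le ((continuous_id.sub continuous_const).norm) continuous_const

section Meas

variable [MeasurableSpace ℚ_[p]] [BorelSpace ℚ_[p]]
variable (μ : Measure ℚ_[p]) [μ.IsAddHaarMeasure]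

lemma meas_shifted_ball (c : ℚ_[p]) (r : ℝ) :
    μ {x : ℚ_[p] | ‖x - c‖ ≤ r} = μ {x : ℚ_[p] | ‖x‖ ≤ r} := by
  have h : {x : ℚ_[p] | ‖x - c‖ ≤ r} = (fun x => (-c) + x) ⁻¹' {x : ℚ_[p] | ‖x‖ ≤ r} := by
    ext x
    simp only [mem_setOf_eq, mem_preimage]
    rw [show -c + x = x - c by ring]
  rw [h, measure_preimage_add]

lemma meas_B_succ (k : ℤ) : μ (B p k) = p * μ (B p (k - 1)) := by
  rw [ball_decomp (p := p) k,
    measure_biUnion_finset (ball_pieces_disjoint k)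
      (fun j _ => (isClosed_shifted _ _).measurableSet)]
  have : ∀ j ∈ Finset.range p,
      μ {x : ℚ_[p] | ‖x - (j : ℚ_[p]) * (p : ℚ_[p]) ^ (-k)‖ ≤ (p:ℝ)^(k-1)} = μ (B p (k-1)) :=
    fun j _ => meas_shifted_ball μ _ _
  rw [Finset.sum_congr rfl this, Finset.sum_const, Finset.card_range, nsmul_eq_mul]

lemma meas_B (hμ : μ {x : ℚ_[p] | ‖x‖ ≤ 1} = 1) (k : ℤ) :
    μ (B p k) = ENNReal.ofReal ((p : ℝ) ^ k) := by
  have hc0 : (0:ℝ) < (p:ℝ) := hp0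
  have base : μ (B p 0) = ENNReal.ofReal ((p : ℝ) ^ (0:ℤ)) := by
    have : B p 0 = {x : ℚ_[p] | ‖x‖ ≤ 1} := by
      ext x; simp [B]
    rw [this, hμ]; simp
  have hcast : ∀ m : ℤ, (p : ℝ≥0∞) * ENNReal.ofReal ((p:ℝ) ^ (m - 1))
      = ENNReal.ofReal ((p:ℝ) ^ m) := by
    intro m
    rw [show ((p:ℕ) : ℝ≥0∞) = ENNReal.ofReal ((p:ℕ):ℝ) by simp,
      ← ENNReal.ofReal_mul hc0.le]
    congr 1
    rw [mul_comm, ← zpow_add_one₀ hc0.ne']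
    congr 1
    omega
  induction k using Int.induction_on with
  | zero => exact base
  | succ i ih =>
      have e : ((i:ℤ) + 1 - 1) = (i:ℤ) := by ring
      rw [meas_B_succ, e, ih, ← hcast ((i:ℤ) + 1), e]
  | pred i ih =>
      have h1 : (p : ℝ≥0∞) * μ (B p (-(i:ℤ) - 1)) = (p : ℝ≥0∞) * ENNReal.ofReal ((p:ℝ) ^ (-(i:ℤ) - 1)) := by
        rw [← meas_B_succ, ih, ← hcast (-(i:ℤ))]
      exact (ENNReal.mul_right_inj hpE0 hpEtop).mp h1

/-- the sphere -/
def Sph (p : ℕ) [Fact p.Prime] (k : ℤ) : Set ℚ_[p] := {x | ‖x‖ = (p : ℝ) ^ k}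

lemma isClosed_Sph (k : ℤ) : IsClosed (Sph p k) :=
  isClosed_eq continuous_norm continuous_const

lemma Sph_eq_diff (k : ℤ) : Sph p k = B p k \ B p (k - 1) := by
  ext x
  simp only [Sph, B, mem_setOf_eq, mem_diff, not_le]
  constructor
  · intro h
    refine ⟨le_of_eq h, ?_⟩
    rw [h]
    exact zpow_lt_zpow_right₀ hp1 (by omega)
  · rintro ⟨h1, h2⟩
    have := (norm_lt_iff x k).not.mpr (not_le.mpr h2)
    push_neg at this
    exact le_antisymm h1 this

lemma B_mono {k l : ℤ} (h : k ≤ l) : B p k ⊆ B p l := fun x hx =>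
  le_trans hx (zpow_le_zpow_right₀ hp1.le h)

lemma meas_Sph (hμ : μ {x : ℚ_[p] | ‖x‖ ≤ 1} = 1) (k : ℤ) :
    μ (Sph p k) = ENNReal.ofReal ((p : ℝ) ^ k - (p : ℝ) ^ (k-1)) := by
  rw [Sph_eq_diff, measure_diff (B_mono (by omega)) (isClosed_B (k-1)).measurableSet.nullMeasurableSet
    (by rw [meas_B μ hμ]; exact ENNReal.ofReal_ne_top),
    meas_B μ hμ, meas_B μ hμ, ENNReal.ofReal_sub]
  exact (zpow_pos hp0 _).le

lemma meas_B_le (m : ℕ) : μ (B p (-(m:ℤ))) ≤ (p : ℝ≥0∞)⁻¹ ^ m * μ (B p 0) := by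
  induction m with
  | zero => simp
  | succ m ih =>
      have h2 : μ (B p (-(m:ℤ) - 1)) = (p : ℝ≥0∞)⁻¹ * μ (B p (-(m:ℤ))) := by
        rw [meas_B_succ μ (-(m:ℤ)), ← mul_assoc, ENNReal.inv_mul_cancel hpE0 hpEtop, one_mul]
      calc μ (B p (-((m:ℕ)+1:ℕ):ℤ)) = μ (B p (-(m:ℤ) - 1)) := by
            congr 1; push_cast; ring
        _ = (p : ℝ≥0∞)⁻¹ * μ (B p (-(m:ℤ))) := h2
        _ ≤ (p : ℝ≥0∞)⁻¹ * ((p : ℝ≥0∞)⁻¹ ^ m * μ (B p 0)) := by gcongr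
        _ = (p : ℝ≥0∞)⁻¹ ^ (m+1) * μ (B p 0) := by ring

lemma meas_zero : μ ({0} : Set ℚ_[p]) = 0 := by
  have key : ∀ m : ℕ, μ ({0} : Set ℚ_[p]) ≤ (p : ℝ≥0∞)⁻¹ ^ m * μ (B p 0) := by
    intro m
    refine le_trans (measure_mono ?_) (meas_B_le μ m)
    intro x hx
    simp only [mem_singleton_iff] at hx
    simp [B, hx, (zpow_pos (hp0 (p := p)) _).le]
  have hlim : Filter.Tendsto (fun m : ℕ => (p : ℝ≥0∞)⁻¹ ^ m * μ (B p 0)) Filter.atTop (nhds 0) := by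
    rw [show (0 : ℝ≥0∞) = 0 * μ (B p 0) by simp]
    apply ENNReal.Tendsto.mul_const
    · apply ENNReal.tendsto_pow_atTop_nhds_zero_of_lt_one
      rw [ENNReal.inv_lt_one]
      exact_mod_cast Nat.one_lt_cast.mpr (Fact.out : p.Prime).one_lt
    · right
      exact (isCompact_B 0).measure_lt_top.ne
  exact le_antisymm (ge_of_tendsto' hlim key) zero_le


lemma ball_diff_zero (k : ℤ) : B p k \ {0} = ⋃ m : ℕ, Sph p (k - m) := by
  ext x
  simp only [mem_diff, mem_singleton_iff, mem_iUnion, B, Sph, mem_setOf_eq]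
  constructor
  · rintro ⟨h1, h2⟩
    have hval : ‖x‖ = (p:ℝ) ^ (-x.valuation) := Padic.norm_eq_zpow_neg_valuation h2
    have hle : -x.valuation ≤ k := by
      by_contra h
      push_neg at h
      have h3 := zpow_lt_zpow_right₀ (hp1 (p := p)) h
      rw [← hval] at h3
      linarith
    refine ⟨(k + x.valuation).toNat, ?_⟩
    rw [hval]
    congr 1
    omega
  · rintro ⟨m, hm⟩
    constructor
    · rw [hm]; exact zpow_le_zpow_right₀ hp1.le (by omega)
    · intro h0
      rw [h0, norm_zero] at hm
      exact absurd hm.symm (ne_of_gt (zpow_pos hp0 _))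

lemma sph_pairwise (k : ℤ) :
    Pairwise (Function.onFun Disjoint fun m : ℕ => (Sph p (k - m) : Set ℚ_[p])) := by
  intro m m' hmm
  refine Set.disjoint_left.mpr fun x hx1 hx2 => ?_
  simp only [Sph, mem_setOf_eq] at hx1 hx2
  have h := hx1.symm.trans hx2
  rcases lt_or_gt_of_ne (show (k - (m:ℤ)) ≠ (k - (m':ℤ)) by omega) with hl | hl
  · exact absurd h (ne_of_lt (zpow_lt_zpow_right₀ hp1 hl))
  · exact absurd h.symm (ne_of_lt (zpow_lt_zpow_right₀ hp1 hl))

lemma lintegral_sph (k : ℤ) (g : ℝ → ℝ≥0∞) :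
    ∫⁻ x in Sph p k, g ‖x‖ ∂μ = g ((p:ℝ)^k) * μ (Sph p k) := by
  rw [setLIntegral_congr_fun (isClosed_Sph k).measurableSet
    (fun x (hx : x ∈ Sph p k) => by rw [show ‖x‖ = (p:ℝ)^k from hx]),
    setLIntegral_const]

lemma measurable_norm_rpow (a : ℚ_[p]) (β : ℝ) :
    Measurable fun x : ℚ_[p] => ‖x - a‖ ^ β := by
  have hn : Measurable fun x : ℚ_[p] => ‖x - a‖ :=
    ((continuous_id.sub continuous_const).norm).measurable
  have heq : (fun x : ℚ_[p] => ‖x - a‖ ^ β)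
      = fun x => if ‖x - a‖ = 0 then (0:ℝ) ^ β else Real.exp (Real.log ‖x - a‖ * β) := by
    funext x
    split_ifs with h
    · rw [h]
    · rw [Real.rpow_def_of_pos (lt_of_le_of_ne (norm_nonneg _) (Ne.symm h))]
  rw [heq]
  exact Measurable.ite (hn (measurableSet_singleton 0)) measurable_const
    (Real.measurable_exp.comp ((Real.measurable_log.comp hn).mul_const β))

lemma real_term (c : ℝ) (hc : 1 < c) (α : ℝ) (t : ℝ) :
    c ^ (t*(α-1)) * (c ^ t - c ^ (t-1)) = (c ^ (t*α)) * (1 - 1/c) := by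
  have hc0 : (0:ℝ) < c := lt_trans one_pos hc
  have h1 : c ^ (t*(α-1)) * c ^ t = c ^ (t*α) := by
    rw [← Real.rpow_add hc0]; congr 1; ring
  have h2 : c ^ (t*(α-1)) * (c ^ t / c) = c ^ (t*α) / c := by
    rw [← mul_div_assoc, h1]
  rw [Real.rpow_sub hc0, Real.rpow_one, mul_sub, h1, h2]
  field_simp

end Meas

end PadicSphereAux

open PadicSphereAux in
theorem padic_integral_sphere_rpow
    (p : ℕ) [Fact p.Prime]
    [MeasurableSpace ℚ_[p]] [BorelSpace ℚ_[p]]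
    (μ : Measure ℚ_[p]) [μ.IsAddHaarMeasure]
    (hμ : μ {x : ℚ_[p] | ‖x‖ ≤ 1} = 1)
    (α : ℝ) (hα : 0 < α) (n : ℤ) (a : ℚ_[p]) (ha : ‖a‖ = (p : ℝ) ^ n) :
    ∫ x in {x : ℚ_[p] | ‖x‖ = (p : ℝ) ^ n}, ‖x - a‖ ^ (α - 1) ∂μ
      = ((p : ℝ) - 2 + (p : ℝ) ^ (-α)) / ((p : ℝ) * (1 - (p : ℝ) ^ (-α))) * ‖a‖ ^ α := by
  have hc1 : (1:ℝ) < (p:ℝ) := hp1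
  have hc0 : (0:ℝ) < (p:ℝ) := hp0
  have hc2 : (2:ℝ) ≤ (p:ℝ) := by exact_mod_cast (Fact.out : p.Prime).two_le
  set q : ℝ := (p:ℝ) ^ (-α) with hqdef
  have hq0 : (0:ℝ) < q := Real.rpow_pos_of_pos hc0 _
  have hq1 : q < 1 := by
    rw [hqdef]
    exact Real.rpow_lt_one_of_one_lt_of_neg hc1 (by linarith)
  set S : Set ℚ_[p] := {x : ℚ_[p] | ‖x‖ = (p : ℝ) ^ n} with hSdef
  set A : Set ℚ_[p] := {x : ℚ_[p] | ‖x - a‖ ≤ (p:ℝ) ^ (n-1)} with hAdef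
  have hS_eq : S = Sph p n := rfl
  have hS_meas : MeasurableSet S := (isClosed_Sph n).measurableSet
  have hA_meas : MeasurableSet A := (isClosed_shifted a _).measurableSet
  have hA_sub : A ⊆ S := by
    intro x hx
    have hx' : ‖x - a‖ ≤ (p:ℝ)^(n-1) := hx
    have hxa : ‖x - a‖ < ‖a‖ := by
      rw [ha]; exact lt_of_le_of_lt hx' (zpow_lt_zpow_right₀ hc1 (by omega))
    have hnn : ‖x‖ = ‖a‖ := by
      have hne : ‖x - a‖ ≠ ‖a‖ := ne_of_lt hxa
      calc ‖x‖ = ‖(x - a) + a‖ := by ring_nf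
        _ = max ‖x - a‖ ‖a‖ := Padic.add_eq_max_of_ne hne
        _ = ‖a‖ := max_eq_right hxa.le
    show ‖x‖ = (p:ℝ)^n
    rw [hnn, ha]
  have hC_norm : ∀ x ∈ S \ A, ‖x - a‖ = (p:ℝ) ^ n := by
    rintro x ⟨hxS, hxA⟩
    have hxS' : ‖x‖ = (p:ℝ)^n := hxS
    have h1 : ‖x - a‖ ≤ (p:ℝ)^n := by
      calc ‖x - a‖ = ‖x + (-a)‖ := by ring_nf
        _ ≤ max ‖x‖ ‖-a‖ := Padic.nonarchimedean _ _
        _ ≤ (p:ℝ)^n := max_le (le_of_eq hxS') (by rw [norm_neg, ha])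
    have h2 : ¬ (‖x - a‖ ≤ (p:ℝ)^(n-1)) := hxA
    rw [← norm_lt_iff] at h2
    exact le_antisymm h1 (not_lt.mp h2)
  have hf_meas := measurable_norm_rpow (p := p) a (α-1)
  have hf_nonneg : (0 : ℚ_[p] → ℝ) ≤ᵐ[μ.restrict S] fun x => ‖x - a‖ ^ (α - 1) :=
    Filter.Eventually.of_forall (fun x => Real.rpow_nonneg (norm_nonneg _) _)
  rw [integral_eq_lintegral_of_nonneg_ae hf_nonneg hf_meas.aestronglyMeasurable]
  -- measure computations
  have hmuA : μ A = ENNReal.ofReal ((p:ℝ)^(n-1)) := by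
    rw [hAdef, meas_shifted_ball μ a]
    exact meas_B μ hμ (n-1)
  have hmuS : μ S = ENNReal.ofReal ((p:ℝ)^n - (p:ℝ)^(n-1)) := by
    rw [hS_eq]; exact meas_Sph μ hμ n
  have hAfin : μ A ≠ ∞ := by rw [hmuA]; exact ENNReal.ofReal_ne_top
  -- split
  have hsplit : ∫⁻ x in S, ENNReal.ofReal (‖x - a‖ ^ (α-1)) ∂μ
      = (∫⁻ x in A, ENNReal.ofReal (‖x - a‖ ^ (α-1)) ∂μ)
        + ∫⁻ x in S \ A, ENNReal.ofReal (‖x - a‖ ^ (α-1)) ∂μ := by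
    rw [← lintegral_union (hS_meas.diff hA_meas) Set.disjoint_sdiff_right,
      Set.union_diff_cancel hA_sub]
  -- the outer part
  have hLC : ∫⁻ x in S \ A, ENNReal.ofReal (‖x - a‖ ^ (α-1)) ∂μ
      = ENNReal.ofReal (((p:ℝ)^n) ^ (α-1) * ((p:ℝ)^n - 2*(p:ℝ)^(n-1))) := by
    rw [setLIntegral_congr_fun (hS_meas.diff hA_meas)
      (fun x hx => by rw [hC_norm x hx]),
      setLIntegral_const,
      measure_diff hA_sub hA_meas.nullMeasurableSet hAfin, hmuS, hmuA,
      ← ENNReal.ofReal_sub _ (zpow_pos hc0 _).le,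
      ← ENNReal.ofReal_mul (Real.rpow_nonneg (zpow_pos hc0 _).le _)]
    congr 1
    ring
  -- translation
  have htrans : ∫⁻ x in A, ENNReal.ofReal (‖x - a‖ ^ (α-1)) ∂μ
      = ∫⁻ x in B p (n-1), ENNReal.ofReal (‖x‖ ^ (α-1)) ∂μ := by
    have hmp : MeasurePreserving (fun x : ℚ_[p] => x + a) μ μ :=
      measurePreserving_add_right μ a
    have hemb : MeasurableEmbedding (fun x : ℚ_[p] => x + a) :=
      (Homeomorph.addRight a).measurableEmbedding
    have hpre : (fun x : ℚ_[p] => x + a) ⁻¹' A = B p (n-1) := by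
      ext x
      simp only [hAdef, B, mem_preimage, mem_setOf_eq, add_sub_cancel_right]
    rw [← hmp.setLIntegral_comp_preimage_emb hemb
      (fun y => ENNReal.ofReal (‖y - a‖ ^ (α-1))) A, hpre]
    exact lintegral_congr (fun x => by rw [add_sub_cancel_right])
  -- ball decomposition
  have hball : ∫⁻ x in B p (n-1), ENNReal.ofReal (‖x‖ ^ (α-1)) ∂μ
      = ∑' m : ℕ, ENNReal.ofReal (((p:ℝ)^(n-1-(m:ℤ))) ^ (α-1)) * μ (Sph p (n-1-(m:ℤ))) := by
    have h0 : μ (B p (n-1) ∩ {0}) = 0 :=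
      measure_mono_null inter_subset_right (meas_zero μ)
    have hdecomp : B p (n-1) = (B p (n-1) \ {0}) ∪ (B p (n-1) ∩ {0}) :=
      (Set.diff_union_inter _ _).symm
    rw [hdecomp, lintegral_union
        ((isClosed_B _).measurableSet.inter (measurableSet_singleton 0))
        Set.disjoint_sdiff_inter,
      setLIntegral_measure_zero _ _ h0, add_zero,
      ball_diff_zero, lintegral_iUnion (fun m => (isClosed_Sph _).measurableSet)
        (sph_pairwise _)]
    exact tsum_congr fun m => lintegral_sph μ _ (fun t => ENNReal.ofReal (t ^ (α-1)))
  -- summation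
  set K : ℝ := (p:ℝ) ^ (((n:ℝ)-1)*α) * (1 - 1/(p:ℝ)) with hKdef
  have hKnn : 0 ≤ K := by
    apply mul_nonneg (Real.rpow_nonneg hc0.le _)
    have : 1/(p:ℝ) ≤ 1 := by rw [div_le_one hc0]; linarith
    linarith
  have hqm : ∀ m : ℕ, q ^ m = (p:ℝ) ^ ((-α) * m) := by
    intro m
    rw [hqdef, ← Real.rpow_natCast ((p:ℝ)^(-α)) m, ← Real.rpow_mul hc0.le]
  have hterm : ∀ m : ℕ,
      ENNReal.ofReal (((p:ℝ)^(n-1-(m:ℤ))) ^ (α-1)) * μ (Sph p (n-1-(m:ℤ)))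
        = ENNReal.ofReal (K * q ^ m) := by
    intro m
    rw [meas_Sph μ hμ, ← ENNReal.ofReal_mul (Real.rpow_nonneg (zpow_pos hc0 _).le _)]
    congr 1
    have e1 : ((p:ℝ) ^ (n-1-(m:ℤ))) = (p:ℝ) ^ (((n:ℝ)-1-m)) := by
      rw [← Real.rpow_intCast (p:ℝ) (n-1-(m:ℤ))]
      congr 1
      push_cast
      ring
    have e2 : ((p:ℝ) ^ (n-1-(m:ℤ)-1)) = (p:ℝ) ^ (((n:ℝ)-1-m)-1) := by
      rw [← Real.rpow_intCast (p:ℝ) (n-1-(m:ℤ)-1)]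
      congr 1
      push_cast
      ring
    rw [e1, e2, ← Real.rpow_mul hc0.le, real_term (p:ℝ) hc1 α ((n:ℝ)-1-m),
      show (((n:ℝ)-1-m)*α) = ((n:ℝ)-1)*α + (-α)*m by ring,
      Real.rpow_add hc0, hKdef, hqm m]
    ring
  have hsum : ∑' m : ℕ, ENNReal.ofReal (K * q ^ m) = ENNReal.ofReal (K / (1 - q)) := by
    rw [← ENNReal.ofReal_tsum_of_nonneg
        (fun m => mul_nonneg hKnn (pow_nonneg hq0.le m))
        ((summable_geometric_of_lt_one hq0.le hq1).mul_left K),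
      tsum_mul_left, tsum_geometric_of_lt_one hq0.le hq1, div_eq_mul_inv]
  -- combine
  have hv_nn : (0:ℝ) ≤ ((p:ℝ)^n) ^ (α-1) * ((p:ℝ)^n - 2*(p:ℝ)^(n-1)) := by
    apply mul_nonneg (Real.rpow_nonneg (zpow_pos hc0 _).le _)
    have hzz : (p:ℝ)^n = (p:ℝ)^(n-1) * (p:ℝ) := by
      rw [← zpow_add_one₀ hc0.ne']
      congr 1
      omega
    nlinarith [zpow_pos hc0 (n-1)]
  have hu_nn : (0:ℝ) ≤ K / (1 - q) := div_nonneg hKnn (by linarith)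
  rw [hsplit, hLC, htrans, hball, tsum_congr hterm, hsum,
    ← ENNReal.ofReal_add hu_nn hv_nn, ENNReal.toReal_ofReal (add_nonneg hu_nn hv_nn)]
  -- final real algebra
  rw [ha]
  set X : ℝ := (p:ℝ) ^ ((n:ℝ)*α) with hXdef
  have haX : ((p:ℝ)^n) ^ α = X := by
    rw [← Real.rpow_intCast (p:ℝ) n, ← Real.rpow_mul hc0.le]
  have hKX : K = X * q * (1 - 1/(p:ℝ)) := by
    rw [hKdef, show (((n:ℝ)-1)*α) = (n:ℝ)*α + (-α) by ring, Real.rpow_add hc0,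
      hXdef, hqdef]
  have h1 : (p:ℝ) ^ ((n:ℝ)*(α-1)) * (p:ℝ) ^ ((n:ℝ)) = X := by
    rw [← Real.rpow_add hc0, hXdef]
    congr 1
    ring
  have h2 : (p:ℝ) ^ ((n:ℝ)*(α-1)) * (p:ℝ) ^ ((n:ℝ)-1) = X / (p:ℝ) := by
    rw [← Real.rpow_add hc0, show ((n:ℝ)*(α-1) + ((n:ℝ)-1)) = (n:ℝ)*α - 1 by ring,
      Real.rpow_sub hc0, Real.rpow_one, hXdef]
  have hvX : ((p:ℝ)^n) ^ (α-1) * ((p:ℝ)^n - 2*(p:ℝ)^(n-1)) = X - 2*(X/(p:ℝ)) := by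
    have b1 : ((p:ℝ) ^ (n:ℤ)) = (p:ℝ) ^ ((n:ℝ)) := (Real.rpow_intCast _ _).symm
    have b2 : ((p:ℝ) ^ ((n:ℤ)-1)) = (p:ℝ) ^ (((n:ℝ))-1) := by
      rw [← Real.rpow_intCast (p:ℝ) (n-1)]
      congr 1
      push_cast
      ring
    rw [b1, b2, ← Real.rpow_mul hc0.le, mul_sub, h1]
    rw [show (p:ℝ) ^ ((n:ℝ)*(α-1)) * (2*(p:ℝ)^((n:ℝ)-1))
      = 2*((p:ℝ) ^ ((n:ℝ)*(α-1)) * (p:ℝ)^((n:ℝ)-1)) by ring, h2]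
  rw [hvX, haX, hKX]
  have hq1' : (1:ℝ) - q ≠ 0 := by linarith
  field_simp
  ring
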